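/- Assume each constant-term matrix D_{i,0} (the entrywise coefficient of the constant monomial in D_i) is invertible in F^{w×w}. Then the matrix product D = D_1·D_2⋯D_d has w²-block-support concentration: for every exponent vector e, the coefficient D_e lies in the F-span of {D_f : bs(f) ≤ w² - 1}. -/

import Mathlib

open Finset

/-- The block-support `bS(e)` of an exponent vector `e`: the set of blocks `i` (under the
block assignment `π` of variables to blocks) on which `e` is not identically zero. -/
def blockSupport {n d : ℕ} (π : Fin n → Fin d) (e : Fin n → ℕ) : Finset (Fin d) :=
  Finset.univ.filter fun i => ∃ j, π j = i ∧ e j ≠ 0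

/-- The monomial `x_i^{e_i}`: the restriction of the exponent vector `e` to block `i`. -/
noncomputable def blockMonomial {n d : ℕ} (π : Fin n → Fin d) (i : Fin d)
    (e : Fin n → ℕ) : Fin n →₀ ℕ :=
  Finsupp.equivFunOnFinite.symm fun j => if π j = i then e j else 0

/-- `D_e = D_{1,e_1}·D_{2,e_2}⋯D_{d,e_d}`, the coefficient of `x^e` in the matrix product
`D_1·D_2⋯D_d` (the variable sets of the factors being disjoint). -/
noncomputable def blockCoeff {F : Type*} [Field F] {w n d : ℕ} (π : Fin n → Fin d)
    (D : Fin d → Matrix (Fin w) (Fin w) (MvPolynomial (Fin n) F)) (e : Fin n → ℕ) :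
    Matrix (Fin w) (Fin w) F :=
  ((List.finRange d).map fun i =>
    (D i).map (MvPolynomial.coeff (blockMonomial π i e))).prod

namespace BSCaux

variable {F : Type*} [Field F] {w n d : ℕ} (π : Fin n → Fin d)
  (D : Fin d → Matrix (Fin w) (Fin w) (MvPolynomial (Fin n) F))

noncomputable def A (i : Fin d) (e : Fin n → ℕ) : Matrix (Fin w) (Fin w) F :=
  (D i).map (MvPolynomial.coeff (blockMonomial π i e))

noncomputable def pre (c : ℕ) (e : Fin n → ℕ) : Matrix (Fin w) (Fin w) F :=
  (((List.finRange d).map fun i => A π D i e).take c).prod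

noncomputable def suf (c : ℕ) (e : Fin n → ℕ) : Matrix (Fin w) (Fin w) F :=
  (((List.finRange d).map fun i => A π D i e).drop c).prod

lemma blockCoeff_eq (e : Fin n → ℕ) :
    blockCoeff π D e = ((List.finRange d).map fun i => A π D i e).prod := rfl

lemma pre_mul_suf (c : ℕ) (e : Fin n → ℕ) :
    pre π D c e * suf π D c e = blockCoeff π D e :=
  List.prod_take_mul_prod_drop _ _

lemma blockMonomial_congr {e e' : Fin n → ℕ} (i : Fin d)
    (h : ∀ j, π j = i → e j = e' j) : blockMonomial π i e = blockMonomial π i e' := by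
  unfold blockMonomial
  congr 1
  funext j
  by_cases hj : π j = i <;> simp [hj, h j]

lemma A_congr {e e' : Fin n → ℕ} (i : Fin d) (h : ∀ j, π j = i → e j = e' j) :
    A π D i e = A π D i e' := by
  unfold A; rw [blockMonomial_congr π i h]

lemma mem_take_finRange {c : ℕ} {i : Fin d} (h : i ∈ (List.finRange d).take c) :
    (i : ℕ) < c := by
  rw [List.mem_iff_getElem] at h
  obtain ⟨j, hj, hji⟩ := h
  have hj' : j < c := by
    simpa using (lt_of_lt_of_le hj (by simp [List.length_take]))
  rw [List.getElem_take] at hji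
  simp only [List.getElem_finRange] at hji
  subst hji
  simpa using hj'

lemma mem_drop_finRange {c : ℕ} {i : Fin d} (h : i ∈ (List.finRange d).drop c) :
    c ≤ (i : ℕ) := by
  rw [List.mem_iff_getElem] at h
  obtain ⟨j, hj, hji⟩ := h
  rw [List.getElem_drop] at hji
  simp only [List.getElem_finRange] at hji
  subst hji
  simp

lemma pre_congr {c : ℕ} {e e' : Fin n → ℕ}
    (h : ∀ j, (π j : ℕ) < c → e j = e' j) : pre π D c e = pre π D c e' := by
  unfold pre
  rw [← List.map_take, ← List.map_take]
  congr 1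
  apply List.map_congr_left
  intro i hi
  exact A_congr π D i fun j hj => h j (by rw [hj]; exact mem_take_finRange hi)

lemma suf_congr {c : ℕ} {e e' : Fin n → ℕ}
    (h : ∀ j, c ≤ (π j : ℕ) → e j = e' j) : suf π D c e = suf π D c e' := by
  unfold suf
  rw [← List.map_drop, ← List.map_drop]
  congr 1
  apply List.map_congr_left
  intro i hi
  exact A_congr π D i fun j hj => h j (by rw [hj]; exact mem_drop_finRange hi)

lemma blockMonomial_zero (i : Fin d) : blockMonomial π i (fun _ => 0) = 0 := by
  ext j
  simp [blockMonomial]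

lemma A_zero (i : Fin d) : A π D i (fun _ => 0) = (D i).map (MvPolynomial.coeff 0) := by
  unfold A
  rw [blockMonomial_zero]

lemma isUnit_suf_zero (hinv : ∀ i, IsUnit ((D i).map (MvPolynomial.coeff (0 : Fin n →₀ ℕ))))
    (c : ℕ) : IsUnit (suf π D c (fun _ => 0)) := by
  apply List.prod_isUnit
  intro m hm
  have hm' := List.drop_subset _ _ hm
  obtain ⟨i, _, rfl⟩ := List.mem_map.mp hm'
  rw [A_zero]
  exact hinv i

lemma blockSupport_subset {e e' : Fin n → ℕ} (h : ∀ j, e j ≠ 0 → e' j ≠ 0) :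
    blockSupport π e ⊆ blockSupport π e' := by
  intro i hi
  simp only [blockSupport, mem_filter, mem_univ, true_and] at hi ⊢
  obtain ⟨j, hj, hje⟩ := hi
  exact ⟨j, hj, h j hje⟩

lemma step (hw : 1 ≤ w)
    (hinv : ∀ i, IsUnit ((D i).map (MvPolynomial.coeff (0 : Fin n →₀ ℕ))))
    (e : Fin n → ℕ) (hcard : w ^ 2 ≤ (blockSupport π e).card) :
    blockCoeff π D e ∈ Submodule.span F
      {M | ∃ f, (blockSupport π f).card < (blockSupport π e).card ∧ M = blockCoeff π D f} := by
  classical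
  set S := blockSupport π e with hS
  set u : Fin (w ^ 2) → Fin d := fun k => S.orderEmbOfFin rfl (Fin.castLE hcard k) with hu
  have hu_mem : ∀ k, u k ∈ S := fun k => S.orderEmbOfFin_mem rfl _
  have hu_mono : ∀ {k k' : Fin (w ^ 2)}, k < k' → u k < u k' := by
    intro k k' hkk
    exact (S.orderEmbOfFin rfl).strictMono (Fin.strictMono_castLE hcard hkk)
  set uN : ℕ → ℕ := fun m => if h : m < w ^ 2 then (u ⟨m, h⟩ : ℕ) else m + d with huN
  have huN_lt : ∀ {m m' : ℕ}, m < m' → m' < w ^ 2 → uN m < uN m' := by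
    intro m m' h h'
    simp only [huN, dif_pos (h.trans h'), dif_pos h']
    exact_mod_cast hu_mono (by simp [Fin.lt_def, h])
  have huN_le : ∀ {m m' : ℕ}, m ≤ m' → m' < w ^ 2 → uN m ≤ uN m' := by
    intro m m' h h'
    rcases eq_or_lt_of_le h with rfl | h
    · exact le_rfl
    · exact (huN_lt h h').le
  set tN : ℕ → ℕ := fun k => if k = 0 then 0 else uN (k - 1) + 1 with htN
  have htN_le : ∀ {a b : ℕ}, a ≤ b → b ≤ w ^ 2 → tN a ≤ tN b := by
    intro a b hab hb
    by_cases ha : a = 0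
    · simp [htN, ha]
    · have hb0 : b ≠ 0 := by omega
      simp only [htN, if_neg ha, if_neg hb0]
      have := huN_le (show a - 1 ≤ b - 1 by omega) (show b - 1 < w ^ 2 by omega)
      omega
  have htN_le_uN : ∀ {k : ℕ}, k < w ^ 2 → tN k ≤ uN k := by
    intro k hk
    by_cases h0 : k = 0
    · simp [htN, h0]
    · simp only [htN, if_neg h0]
      have := huN_lt (show k - 1 < k by omega) hk
      omega
  set trunc : ℕ → Fin n → ℕ := fun c j => if (π j : ℕ) < c then e j else 0 with htr
  set B : Fin (w ^ 2 + 1) → Matrix (Fin w) (Fin w) F :=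
    fun k => blockCoeff π D (trunc (tN (k : ℕ))) with hB
  have hnotli : ¬ LinearIndependent F B := by
    intro h
    have h2 := h.fintype_card_le_finrank
    rw [Module.finrank_matrix] at h2
    simp only [Fintype.card_fin, Module.finrank_self, mul_one] at h2
    have : w * w = w ^ 2 := (sq w).symm
    omega
  obtain ⟨g, hg0, i0, hi0⟩ := Fintype.not_linearIndependent_iff.mp hnotli
  set K := Finset.univ.filter (fun k => g k ≠ 0) with hK
  have hKne : K.Nonempty := ⟨i0, by simp [hK, hi0]⟩
  set km := K.max' hKne with hkm
  have hgkm : g km ≠ 0 := by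
    have := K.max'_mem hKne
    simp only [hK, Finset.mem_filter] at this
    exact this.2
  have hmax : ∀ k, g k ≠ 0 → k ≤ km := fun k hk => K.le_max' k (by simp [hK, hk])
  have hkmle : (km : ℕ) ≤ w ^ 2 := Nat.lt_succ_iff.mp km.isLt
  set cs : ℕ := tN (km : ℕ) with hcs
  set P : Fin (w ^ 2 + 1) → Matrix (Fin w) (Fin w) F :=
    fun k => pre π D cs (trunc (tN (k : ℕ))) with hP
  set Cs := suf π D cs (fun _ => 0) with hCsdef
  have hBk : ∀ k : Fin (w ^ 2 + 1), k ≤ km → B k = P k * Cs := by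
    intro k hk
    have hkk : (k : ℕ) ≤ (km : ℕ) := hk
    simp only [hB, hP, hCsdef]
    rw [← pre_mul_suf π D cs (trunc (tN (k : ℕ)))]
    congr 1
    apply suf_congr
    intro j hj
    have h1 : tN (k : ℕ) ≤ cs := htN_le hkk hkmle
    simp only [htr]
    rw [if_neg (by omega)]
  have hCsU : IsUnit Cs := isUnit_suf_zero π D hinv cs
  have hsum0 : (∑ k, g k • P k) * Cs = 0 := by
    rw [Finset.sum_mul]
    have hcongr : ∀ k ∈ Finset.univ, (g k • P k) * Cs = g k • B k := by
      intro k _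
      by_cases hk : g k = 0
      · simp [hk]
      · rw [smul_mul_assoc, ← hBk k (hmax k hk)]
    rw [Finset.sum_congr rfl hcongr, hg0]
  have hsum : ∑ k, g k • P k = 0 := by
    obtain ⟨v, hv⟩ := hCsU
    rw [← hv] at hsum0
    have h5 : (∑ k, g k • P k) * (v : Matrix (Fin w) (Fin w) F)
        * ((v⁻¹ : (Matrix (Fin w) (Fin w) F)ˣ) : Matrix (Fin w) (Fin w) F)
        = 0 * ((v⁻¹ : (Matrix (Fin w) (Fin w) F)ˣ) : Matrix (Fin w) (Fin w) F) := by
      rw [hsum0]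
    rwa [zero_mul, mul_assoc, Units.mul_inv, mul_one] at h5
  rw [← Finset.add_sum_erase _ _ (Finset.mem_univ km)] at hsum
  have hPkm : P km = ∑ k ∈ Finset.univ.erase km, (-(g km)⁻¹ * g k) • P k := by
    have h3 : g km • P km = -∑ k ∈ Finset.univ.erase km, g k • P k := by
      rw [eq_neg_iff_add_eq_zero]; exact hsum
    have h4 := congrArg (fun M => (g km)⁻¹ • M) h3
    simp only [inv_smul_smul₀ hgkm] at h4
    rw [h4, smul_neg, Finset.smul_sum]
    rw [← Finset.sum_neg_distrib]
    apply Finset.sum_congr rfl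
    intro k _
    rw [smul_smul, ← neg_smul, neg_mul]
  have hfin : blockCoeff π D e
      = ∑ k ∈ Finset.univ.erase km, (-(g km)⁻¹ * g k) • (P k * suf π D cs e) := by
    rw [← pre_mul_suf π D cs e]
    have hpre : pre π D cs e = P km := by
      apply pre_congr
      intro j hj
      simp only [htr]
      rw [if_pos hj]
    rw [hpre, hPkm, Finset.sum_mul]
    apply Finset.sum_congr rfl
    intro k _
    rw [smul_mul_assoc]
  rw [hfin]
  apply Submodule.sum_mem
  intro k hk
  by_cases hgk : g k = 0
  · simp only [hgk, mul_zero, zero_smul]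
    exact Submodule.zero_mem _
  · apply Submodule.smul_mem
    have hklt : (k : ℕ) < (km : ℕ) := by
      have hle : k ≤ km := hmax k hgk
      have hne : k ≠ km := Finset.ne_of_mem_erase hk
      have : (k : ℕ) ≤ (km : ℕ) := hle
      rcases lt_or_eq_of_le this with h | h
      · exact h
      · exact absurd (Fin.ext h) hne
    have hkw : (k : ℕ) < w ^ 2 := lt_of_lt_of_le hklt hkmle
    obtain ⟨md, hmd⟩ : ∃ md : Fin n → ℕ,
        md = fun j => if (π j : ℕ) < tN (k : ℕ) ∨ cs ≤ (π j : ℕ) then e j else 0 := ⟨_, rfl⟩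
    have hpre2 : pre π D cs (trunc (tN (k : ℕ))) = pre π D cs md := by
      apply pre_congr
      intro j hj
      simp only [htr, hmd]
      by_cases h1 : (π j : ℕ) < tN (k : ℕ)
      · rw [if_pos h1, if_pos (Or.inl h1)]
      · rw [if_neg h1, if_neg (by omega)]
    have hsuf2 : suf π D cs e = suf π D cs md := by
      apply suf_congr
      intro j hj
      simp only [hmd]
      rw [if_pos (Or.inr hj)]
    have heq : P k * suf π D cs e = blockCoeff π D md := by
      simp only [hP]
      rw [hpre2, hsuf2, pre_mul_suf]
    rw [heq]
    apply Submodule.subset_span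
    refine ⟨md, ?_, rfl⟩
    have hsub : blockSupport π md ⊆ S := by
      apply blockSupport_subset
      intro j hj
      simp only [hmd] at hj
      split_ifs at hj
      · exact hj
      · exact absurd rfl hj
    set kk : Fin (w ^ 2) := ⟨(k : ℕ), hkw⟩ with hkk
    have hiS : u kk ∈ S := hu_mem kk
    have huval : ((u kk : Fin d) : ℕ) = uN (k : ℕ) := by
      simp only [huN, dif_pos hkw]
      rfl
    have hnotmem : u kk ∉ blockSupport π md := by
      simp only [blockSupport, Finset.mem_filter, Finset.mem_univ, true_and, not_exists]
      intro j
      rw [not_and]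
      intro hj
      rw [ne_eq, not_not, hmd]
      have hπj : (π j : ℕ) = uN (k : ℕ) := by rw [hj, huval]
      have hlow : tN (k : ℕ) ≤ uN (k : ℕ) := htN_le_uN hkw
      have hhigh : uN (k : ℕ) < cs := by
        have hkm0 : (km : ℕ) ≠ 0 := by omega
        simp only [hcs, htN, if_neg hkm0]
        have := huN_le (show (k : ℕ) ≤ (km : ℕ) - 1 by omega)
          (show (km : ℕ) - 1 < w ^ 2 by omega)
        omega
      exact if_neg (by omega)
    exact Finset.card_lt_card ((Finset.ssubset_iff_of_subset hsub).mpr ⟨u kk, hiS, hnotmem⟩)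
end BSCaux

/-- `w²`-block-support concentration: if all constant-term matrices `D_{i,0}` are
invertible, then every coefficient of the matrix product `D = D_1·D_2⋯D_d` lies in the span
of the coefficients of monomials of block-support size at most `w² - 1`. -/
theorem block_support_concentration (F : Type*) [Field F] (w n d : ℕ)
    (hw : 1 ≤ w) (hd : 1 ≤ d) (π : Fin n → Fin d)
    (D : Fin d → Matrix (Fin w) (Fin w) (MvPolynomial (Fin n) F))
    (hvars : ∀ i a b, ∀ j ∈ (D i a b).vars, π j = i)
    (hinv : ∀ i, IsUnit ((D i).map (MvPolynomial.coeff (0 : Fin n →₀ ℕ)))) :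
    ∀ e : Fin n → ℕ, blockCoeff π D e ∈ Submodule.span F
      {M | ∃ f, (blockSupport π f).card ≤ w ^ 2 - 1 ∧ M = blockCoeff π D f} := by
  intro e
  suffices H : ∀ s : ℕ, ∀ e : Fin n → ℕ, (blockSupport π e).card ≤ s →
      blockCoeff π D e ∈ Submodule.span F
        {M | ∃ f, (blockSupport π f).card ≤ w ^ 2 - 1 ∧ M = blockCoeff π D f} by
    exact H _ e le_rfl
  intro s
  induction s with
  | zero =>
    intro e he
    exact Submodule.subset_span ⟨e, by omega, rfl⟩
  | succ s ih =>
    intro e he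
    by_cases hc : (blockSupport π e).card ≤ w ^ 2 - 1
    · exact Submodule.subset_span ⟨e, hc, rfl⟩
    · have hw2 : 1 ≤ w ^ 2 := Nat.one_le_pow _ _ hw
      have hcard : w ^ 2 ≤ (blockSupport π e).card := by omega
      have hstep := BSCaux.step π D hw hinv e hcard
      refine Submodule.span_le.mpr ?_ hstep
      rintro M ⟨f, hf, rfl⟩
      exact ih f (by omega)
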